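/- Let X be a real Hilbert space, let f : X → ℝ∪{+∞} be convex, lower semicontinuous, and proper, let x, x* ∈ X, and let γ > 0. Then equality f(x) + f*(x*) − ⟨x, x*⟩ = ‖x − Prox_{γf}(x + γx*)‖²/γ holds if and only if Prox_{γf}(x + γx*) ∈ ∂f*(x*) and x + γx* − Prox_{γf}(x + γx*) ∈ γ·∂f(x). -/

import Mathlib

open scoped RealInnerProductSpace Pointwise

/-- `f` is proper, convex and lower semicontinuous (values in ℝ ∪ {+∞}, encoded in `EReal`). -/
def IsProperConvexLsc {X : Type*} [NormedAddCommGroup X] [InnerProductSpace ℝ X]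
    (f : X → EReal) : Prop :=
  (∀ z, f z ≠ ⊥) ∧ (∃ z, f z ≠ ⊤) ∧ LowerSemicontinuous f ∧
  (∀ u v : X, ∀ a b : ℝ, 0 ≤ a → 0 ≤ b → a + b = 1 →
    f (a • u + b • v) ≤ (a : EReal) * f u + (b : EReal) * f v)

/-- The Fenchel conjugate of `f`. -/
noncomputable def conj {X : Type*} [NormedAddCommGroup X] [InnerProductSpace ℝ X]
    (f : X → EReal) (v : X) : EReal :=
  ⨆ z : X, (((⟪z, v⟫ : ℝ) : EReal) - f z)

/-- `P` is the proximal mapping of `γ f`: for every `z`, `P z` is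
the unique minimizer over `y` of `f(y) + ‖y − z‖²/(2γ)`. -/
def IsProx {X : Type*} [NormedAddCommGroup X] [InnerProductSpace ℝ X]
    (f : X → EReal) (γ : ℝ) (P : X → X) : Prop :=
  ∀ z, (∀ y, f (P z) + ((‖P z - z‖ ^ 2 / (2 * γ) : ℝ) : EReal)
              ≤ f y + ((‖y - z‖ ^ 2 / (2 * γ) : ℝ) : EReal)) ∧
    ∀ p, (∀ y, f p + ((‖p - z‖ ^ 2 / (2 * γ) : ℝ) : EReal)
              ≤ f y + ((‖y - z‖ ^ 2 / (2 * γ) : ℝ) : EReal)) → p = P z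

/-- The subdifferential of `f`. -/
def subdiff {X : Type*} [NormedAddCommGroup X] [InnerProductSpace ℝ X]
    (f : X → EReal) (u : X) : Set X :=
  {v | ∀ y, f u + ((⟪y - u, v⟫ : ℝ) : EReal) ≤ f y}

private lemma aux_nonpos {A C : ℝ} (hC : 0 ≤ C)
    (h : ∀ t : ℝ, 0 < t → t ≤ 1 → A ≤ t * C) : A ≤ 0 := by
  by_contra h'
  push_neg at h'
  have hden : (0:ℝ) < 2 * (C + 1) := by linarith
  set t := min 1 (A / (2 * (C + 1))) with ht
  have ht0 : 0 < t := lt_min one_pos (div_pos h' hden)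
  have h2 : A ≤ t * C := h t ht0 (min_le_left _ _)
  have h3 : t ≤ A / (2 * (C + 1)) := min_le_right _ _
  have h4 : t * C ≤ (A / (2 * (C + 1))) * C := mul_le_mul_of_nonneg_right h3 hC
  have h5 : (A / (2 * (C + 1))) * C < A := by
    rw [div_mul_eq_mul_div, div_lt_iff₀ hden]
    nlinarith
  linarith

section Lemmas
variable {X : Type*} [NormedAddCommGroup X] [InnerProductSpace ℝ X] {f : X → EReal}

lemma conj_ne_bot' (hf : IsProperConvexLsc f) (v : X) : conj f v ≠ ⊥ := by
  obtain ⟨z0, hz0⟩ := hf.2.1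
  obtain ⟨r, hr⟩ : ∃ r : ℝ, f z0 = (r : EReal) := ⟨_, (EReal.coe_toReal hz0 (hf.1 z0)).symm⟩
  have h1 : ((⟪z0, v⟫ - r : ℝ) : EReal) ≤ conj f v := by
    refine le_trans (le_of_eq ?_) (le_iSup (fun z => (((⟪z, v⟫ : ℝ) : EReal) - f z)) z0)
    rw [hr, ← EReal.coe_sub]
  exact fun hb => EReal.coe_ne_bot _ (le_bot_iff.1 (hb ▸ h1))

lemma fy' (hf : IsProperConvexLsc f) (u v : X) :
    ((⟪u, v⟫ : ℝ) : EReal) ≤ f u + conj f v := by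
  rcases eq_or_ne (f u) ⊤ with h | h
  · rw [h, EReal.top_add_of_ne_bot (conj_ne_bot' hf v)]; exact le_top
  · obtain ⟨r, hr⟩ : ∃ r : ℝ, f u = (r : EReal) := ⟨_, (EReal.coe_toReal h (hf.1 u)).symm⟩
    have h1 : ((⟪u, v⟫ - r : ℝ) : EReal) ≤ conj f v := by
      refine le_trans (le_of_eq ?_) (le_iSup (fun z => (((⟪z, v⟫ : ℝ) : EReal) - f z)) u)
      rw [hr, ← EReal.coe_sub]
    calc ((⟪u, v⟫ : ℝ) : EReal)
        = ((r : ℝ) : EReal) + ((⟪u, v⟫ - r : ℝ) : EReal) := by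
          rw [← EReal.coe_add]; norm_num
      _ ≤ f u + conj f v := by rw [hr]; exact add_le_add_right h1 _

lemma conj_of_subdiff' (hf : IsProperConvexLsc f) {u v : X} {r : ℝ} (hu : f u = (r : EReal))
    (hv : v ∈ subdiff f u) : conj f v = ((⟪u, v⟫ - r : ℝ) : EReal) := by
  apply le_antisymm
  · refine iSup_le fun zz => ?_
    rcases eq_or_ne (f zz) ⊤ with h | h
    · rw [h, EReal.sub_top]; exact bot_le
    · obtain ⟨sz, hz⟩ : ∃ sz : ℝ, f zz = (sz : EReal) :=
        ⟨_, (EReal.coe_toReal h (hf.1 zz)).symm⟩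
      have h2 := hv zz
      rw [hu, hz, ← EReal.coe_add, EReal.coe_le_coe_iff] at h2
      rw [hz, ← EReal.coe_sub, EReal.coe_le_coe_iff]
      have h5 : ⟪zz - u, v⟫ = ⟪zz, v⟫ - ⟪u, v⟫ := inner_sub_left _ _ _
      linarith
  · refine le_trans (le_of_eq ?_) (le_iSup (fun z => (((⟪z, v⟫ : ℝ) : EReal) - f z)) u)
    rw [hu, ← EReal.coe_sub]

lemma subdiff_of_conj' (hf : IsProperConvexLsc f) {u v : X} {r : ℝ} (hu : f u = (r : EReal))
    (hc : conj f v = ((⟪u, v⟫ - r : ℝ) : EReal)) : v ∈ subdiff f u := by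
  intro y
  rcases eq_or_ne (f y) ⊤ with h | h
  · rw [h]; exact le_top
  · obtain ⟨sy, hy⟩ : ∃ sy : ℝ, f y = (sy : EReal) :=
      ⟨_, (EReal.coe_toReal h (hf.1 y)).symm⟩
    have h1 : ((⟪y, v⟫ : ℝ) : EReal) - f y ≤ conj f v :=
      le_iSup (fun z => (((⟪z, v⟫ : ℝ) : EReal) - f z)) y
    rw [hy, ← EReal.coe_sub, hc, EReal.coe_le_coe_iff] at h1
    rw [hu, hy, ← EReal.coe_add, EReal.coe_le_coe_iff]
    have h5 : ⟪y - u, v⟫ = ⟪y, v⟫ - ⟪u, v⟫ := inner_sub_left _ _ _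
    linarith

lemma prox_ne_top' (hf : IsProperConvexLsc f) {γ : ℝ} (hγ : 0 < γ) {P : X → X}
    (hP : IsProx f γ P) (z : X) : f (P z) ≠ ⊤ := by
  obtain ⟨z0, hz0⟩ := hf.2.1
  have h := (hP z).1 z0
  intro htop
  rw [htop, EReal.top_add_of_ne_bot (EReal.coe_ne_bot _)] at h
  obtain ⟨r, hr⟩ : ∃ r : ℝ, f z0 = (r : EReal) := ⟨_, (EReal.coe_toReal hz0 (hf.1 z0)).symm⟩
  rw [hr, ← EReal.coe_add, top_le_iff] at h
  exact (EReal.coe_ne_top _) h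

lemma prox_subdiff' (hf : IsProperConvexLsc f) {γ : ℝ} (hγ : 0 < γ) {P : X → X}
    (hP : IsProx f γ P) (z : X) : γ⁻¹ • (z - P z) ∈ subdiff f (P z) := by
  intro y
  set p := P z with hpdef
  rcases eq_or_ne (f y) ⊤ with h | h
  · rw [h]; exact le_top
  obtain ⟨s, hy⟩ : ∃ s : ℝ, f y = (s : EReal) := ⟨_, (EReal.coe_toReal h (hf.1 y)).symm⟩
  have hpt : f p ≠ ⊤ := prox_ne_top' hf hγ hP z
  obtain ⟨b, hp⟩ : ∃ b : ℝ, f p = (b : EReal) := ⟨_, (EReal.coe_toReal hpt (hf.1 p)).symm⟩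
  rw [hp, hy, ← EReal.coe_add, EReal.coe_le_coe_iff]
  have hgoal : ⟪y - p, γ⁻¹ • (z - p)⟫ = γ⁻¹ * ⟪y - p, z - p⟫ := real_inner_smul_right _ _ _
  rw [hgoal]
  set I := ⟪y - p, z - p⟫ with hI
  set N := ‖y - p‖ ^ 2 with hN
  have hkey : ∀ t : ℝ, 0 < t → t ≤ 1 → 2 * γ * (b - s) + 2 * I ≤ t * N := by
    intro t ht0 ht1
    have conv := hf.2.2.2 p y (1 - t) t (by linarith) (le_of_lt ht0) (by ring)
    rw [hp, hy, ← EReal.coe_mul, ← EReal.coe_mul, ← EReal.coe_add] at conv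
    have hmin := (hP z).1 ((1 - t) • p + t • y)
    rw [← hpdef, hp] at hmin
    have hmin2 : ((b + ‖p - z‖ ^ 2 / (2 * γ) : ℝ) : EReal)
        ≤ (((1 - t) * b + t * s + ‖(1 - t) • p + t • y - z‖ ^ 2 / (2 * γ) : ℝ) : EReal) := by
      rw [EReal.coe_add, EReal.coe_add ((1 - t) * b + t * s)]
      exact le_trans hmin (add_le_add_left conv _)
    rw [EReal.coe_le_coe_iff] at hmin2
    have hE : (1 - t) • p + t • y - z = (p - z) + t • (y - p) := by
      rw [sub_smul, one_smul, smul_sub]; abel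
    have hnorm : ‖(1 - t) • p + t • y - z‖ ^ 2
        = ‖p - z‖ ^ 2 + 2 * (t * ⟪p - z, y - p⟫) + t ^ 2 * N := by
      rw [hE, @norm_add_sq_real, real_inner_smul_right, norm_smul, hN]
      rw [Real.norm_eq_abs, mul_pow, sq_abs]
    rw [hnorm] at hmin2
    have hIcomm : ⟪p - z, y - p⟫ = -I := by
      rw [← neg_sub z p, inner_neg_left, hI, real_inner_comm]
    rw [hIcomm] at hmin2
    -- hmin2 : b + ‖p-z‖^2/(2γ) ≤ (1-t)*b + t*s + (‖p-z‖^2 + 2*(t*(-I)) + t^2*N)/(2γ)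
    have h2γ : (0:ℝ) < 2 * γ := by linarith
    have hm : t * (2 * γ * (b - s) + 2 * I - t * N) ≤ 0 := by
      have := mul_le_mul_of_nonneg_left hmin2 (le_of_lt h2γ)
      have e1 : 2 * γ * (b + ‖p - z‖ ^ 2 / (2 * γ)) = 2 * γ * b + ‖p - z‖ ^ 2 := by
        field_simp
      have e2 : 2 * γ * ((1 - t) * b + t * s +
          (‖p - z‖ ^ 2 + 2 * (t * (-I)) + t ^ 2 * N) / (2 * γ))
          = 2 * γ * ((1 - t) * b + t * s) + (‖p - z‖ ^ 2 + 2 * (t * (-I)) + t ^ 2 * N) := by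
        field_simp
      rw [e1, e2] at this
      nlinarith [this]
    have hu : 2 * γ * (b - s) + 2 * I - t * N ≤ 0 := by
      by_contra hcon
      push_neg at hcon
      nlinarith [mul_pos ht0 hcon]
    linarith
  have hNn : (0:ℝ) ≤ N := by positivity
  have h6 : 2 * γ * (b - s) + 2 * I ≤ 0 := aux_nonpos hNn hkey
  have h7 : γ * (b + γ⁻¹ * I) ≤ γ * s := by
    have e : γ * (b + γ⁻¹ * I) = γ * b + I := by field_simp
    rw [e]; linarith
  exact le_of_mul_le_mul_left h7 hγ

end Lemmas

theorem stmt_10 {X : Type*} [NormedAddCommGroup X] [InnerProductSpace ℝ X] [CompleteSpace X]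
    (f : X → EReal) (hf : IsProperConvexLsc f) (x xs : X) (γ : ℝ) (hγ : 0 < γ)
    (P : X → X) (hP : IsProx f γ P) :
    f x + conj f xs - ((⟪x, xs⟫ : ℝ) : EReal)
        = ((‖x - P (x + γ • xs)‖ ^ 2 / γ : ℝ) : EReal)
      ↔ P (x + γ • xs) ∈ subdiff (conj f) xs ∧
        x + γ • xs - P (x + γ • xs) ∈ γ • subdiff f x := by
  set z := x + γ • xs with hz
  set p := P z with hpdef
  set w := γ⁻¹ • (z - p) with hw
  have hw_sub : w ∈ subdiff f p := prox_subdiff' hf hγ hP z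
  have hpt : f p ≠ ⊤ := prox_ne_top' hf hγ hP z
  obtain ⟨b, hp⟩ : ∃ b : ℝ, f p = (b : EReal) := ⟨_, (EReal.coe_toReal hpt (hf.1 p)).symm⟩
  have hcw : conj f w = ((⟪p, w⟫ - b : ℝ) : EReal) := conj_of_subdiff' hf hp hw_sub
  have hcb : conj f xs ≠ ⊥ := conj_ne_bot' hf xs
  -- inner product algebra
  have hip : ⟪x, w⟫ - ⟪p, w⟫ = ‖x - p‖ ^ 2 / γ + (⟪x, xs⟫ - ⟪p, xs⟫) := by
    have h1 : ⟪x, w⟫ - ⟪p, w⟫ = ⟪x - p, w⟫ := (inner_sub_left _ _ _).symm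
    have h2 : ⟪x - p, w⟫ = γ⁻¹ * ⟪x - p, z - p⟫ := real_inner_smul_right _ _ _
    have h3 : z - p = (x - p) + γ • xs := by rw [hz]; abel
    have h4 : ⟪x - p, z - p⟫ = ‖x - p‖ ^ 2 + γ * ⟪x - p, xs⟫ := by
      rw [h3, inner_add_right, real_inner_self_eq_norm_sq, real_inner_smul_right]
    have h5 : ⟪x - p, xs⟫ = ⟪x, xs⟫ - ⟪p, xs⟫ := inner_sub_left _ _ _
    rw [h1, h2, h4, h5]
    field_simp
  constructor
  · intro heq
    have hfx_t : f x ≠ ⊤ := by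
      intro h
      rw [h, EReal.top_add_of_ne_bot hcb, EReal.top_sub_coe] at heq
      exact (EReal.coe_ne_top _) heq.symm
    obtain ⟨a, ha⟩ : ∃ a : ℝ, f x = (a : EReal) := ⟨_, (EReal.coe_toReal hfx_t (hf.1 x)).symm⟩
    have hct : conj f xs ≠ ⊤ := by
      intro h
      rw [ha, h, EReal.add_top_of_ne_bot (EReal.coe_ne_bot _), EReal.top_sub_coe] at heq
      exact (EReal.coe_ne_top _) heq.symm
    obtain ⟨c, hc⟩ : ∃ c : ℝ, conj f xs = (c : EReal) :=
      ⟨_, (EReal.coe_toReal hct hcb).symm⟩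
    have heqr : a + c - ⟪x, xs⟫ = ‖x - p‖ ^ 2 / γ := by
      rw [ha, hc, ← EReal.coe_add, ← EReal.coe_sub] at heq
      exact_mod_cast heq
    have hg1 : ⟪p, xs⟫ ≤ b + c := by
      have := fy' hf p xs
      rw [hp, hc, ← EReal.coe_add, EReal.coe_le_coe_iff] at this; exact this
    have hg2 : ⟪x, w⟫ ≤ a + (⟪p, w⟫ - b) := by
      have := fy' hf x w
      rw [ha, hcw, ← EReal.coe_add, EReal.coe_le_coe_iff] at this; exact this
    have e1 : b + c = ⟪p, xs⟫ := by linarith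
    have e2 : ⟪x, w⟫ = a + (⟪p, w⟫ - b) := by linarith
    constructor
    · intro y
      have hterm : ((⟪p, y⟫ : ℝ) : EReal) - f p ≤ conj f y :=
        le_iSup (fun z => (((⟪z, y⟫ : ℝ) : EReal) - f z)) p
      rw [hp, ← EReal.coe_sub] at hterm
      refine le_trans (le_of_eq ?_) hterm
      rw [hc, ← EReal.coe_add, EReal.coe_eq_coe_iff]
      have h5 : ⟪y - xs, p⟫ = ⟪y, p⟫ - ⟪xs, p⟫ := inner_sub_left _ _ _
      have h6 : ⟪y, p⟫ = ⟪p, y⟫ := real_inner_comm _ _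
      have h7 : ⟪xs, p⟫ = ⟪p, xs⟫ := real_inner_comm _ _
      linarith
    · refine ⟨w, ?_, ?_⟩
      · refine subdiff_of_conj' hf ha ?_
        rw [hcw, EReal.coe_eq_coe_iff]
        linarith
      · show γ • w = z - p
        rw [hw, smul_inv_smul₀ (ne_of_gt hγ)]
  · rintro ⟨h1, h2⟩
    obtain ⟨w', hw', hw'e⟩ := h2
    have hww : w' = w := by
      rw [hw, ← hw'e, inv_smul_smul₀ (ne_of_gt hγ)]
    rw [hww] at hw'
    have hfx_t : f x ≠ ⊤ := by
      intro h
      have h3 := hw' p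
      rw [h, EReal.top_add_of_ne_bot (EReal.coe_ne_bot _), hp, top_le_iff] at h3
      exact (EReal.coe_ne_top _) h3
    obtain ⟨a, ha⟩ : ∃ a : ℝ, f x = (a : EReal) := ⟨_, (EReal.coe_toReal hfx_t (hf.1 x)).symm⟩
    have hcwx : conj f w = ((⟪x, w⟫ - a : ℝ) : EReal) := conj_of_subdiff' hf ha hw'
    have e2 : ⟪x, w⟫ - a = ⟪p, w⟫ - b := by
      have := hcwx.symm.trans hcw
      exact_mod_cast this
    have hct : conj f xs ≠ ⊤ := by
      intro h
      have h3 := h1 w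
      rw [h, EReal.top_add_of_ne_bot (EReal.coe_ne_bot _), hcw, top_le_iff] at h3
      exact (EReal.coe_ne_top _) h3
    obtain ⟨c, hc⟩ : ∃ c : ℝ, conj f xs = (c : EReal) :=
      ⟨_, (EReal.coe_toReal hct hcb).symm⟩
    have hg1' : c + ⟪w - xs, p⟫ ≤ ⟪p, w⟫ - b := by
      have h3 := h1 w
      rw [hc, hcw, ← EReal.coe_add, EReal.coe_le_coe_iff] at h3
      exact h3
    have hg1 : ⟪p, xs⟫ ≤ b + c := by
      have := fy' hf p xs
      rw [hp, hc, ← EReal.coe_add, EReal.coe_le_coe_iff] at this; exact this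
    have e1 : b + c = ⟪p, xs⟫ := by
      have h5 : ⟪w - xs, p⟫ = ⟪w, p⟫ - ⟪xs, p⟫ := inner_sub_left _ _ _
      have h6 : ⟪w, p⟫ = ⟪p, w⟫ := real_inner_comm _ _
      have h7 : ⟪xs, p⟫ = ⟪p, xs⟫ := real_inner_comm _ _
      linarith
    rw [ha, hc, ← EReal.coe_add, ← EReal.coe_sub, EReal.coe_eq_coe_iff]
    linarith
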